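/- The solution of the second-order cell problem satisfies −1 ≤ γ(y) ≤ 0 for every y with f(y₁) ≤ y₂; in particular its interface average satisfies γ̄ ∈ [−1,0]. -/

import Mathlib

open MeasureTheory Real Set

noncomputable section

/-- Partial derivative in the first variable. -/
def pd1 (u : ℝ → ℝ → ℝ) (x y : ℝ) : ℝ := deriv (fun t => u t y) x

/-- Partial derivative in the second variable. -/
def pd2 (u : ℝ → ℝ → ℝ) (x y : ℝ) : ℝ := deriv (fun t => u x t) y

/-- Laplacian. -/
def lap (u : ℝ → ℝ → ℝ) (x y : ℝ) : ℝ := pd1 (pd1 u) x y + pd2 (pd2 u) x y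

/-- Squared modulus of the gradient. -/
def gradSq (u : ℝ → ℝ → ℝ) (x y : ℝ) : ℝ := (pd1 u x y) ^ 2 + (pd2 u x y) ^ 2

/-- The rough domain Ω^ε. -/
def OmegaEps (f : ℝ → ℝ) (L ε : ℝ) : Set (ℝ × ℝ) :=
  {p | 0 < p.1 ∧ p.1 < L ∧ ε * f (p.1 / ε) < p.2 ∧ p.2 < 1}

/-- The smooth domain Ω⁰. -/
def Omega0 (L : ℝ) : Set (ℝ × ℝ) := Ioo 0 L ×ˢ Ioo (0 : ℝ) 1

/-- The periodic rough strip. -/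
def RoughStrip (f : ℝ → ℝ) (ε : ℝ) : Set (ℝ × ℝ) :=
  {p | ε * f (p.1 / ε) < p.2 ∧ p.2 < 1}

/-- A classical solution of the rough problem `-Δu = C` in `Ω^ε`, `u = 0` on `Γ^ε ∪ Γ¹`,
periodic in `x₁`, with finite Dirichlet energy. -/
structure RoughSolution (f : ℝ → ℝ) (L C ε : ℝ) (u : ℝ → ℝ → ℝ) : Prop where
  cont : ContinuousOn (fun p : ℝ × ℝ => u p.1 p.2) (closure (OmegaEps f L ε))
  periodic : ∀ x y, u (x + L) y = u x y
  smooth : ContDiffOn ℝ 2 (fun p : ℝ × ℝ => u p.1 p.2) (RoughStrip f ε)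
  eqn : ∀ p ∈ OmegaEps f L ε, -(lap u p.1 p.2) = C
  bc_rough : ∀ x, u x (ε * f (x / ε)) = 0
  bc_top : ∀ x, u x 1 = 0
  energy : IntegrableOn (fun p : ℝ × ℝ => gradSq u p.1 p.2) (OmegaEps f L ε)

/-- The zeroth order approximation `u^{0,1}`: Poiseuille profile, linearly extended below. -/
def u01 (C : ℝ) (x y : ℝ) : ℝ := if 0 ≤ y then C / 2 * (1 - y) * y else C / 2 * y

/-- A classical solution of a cell problem: harmonic above the rough boundary
`{y₂ = f(y₁)}`, `2π`-periodic in `y₁`, with boundary value `g` on the rough boundary and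
finite Dirichlet energy over one period. -/
structure CellSolution (f : ℝ → ℝ) (g : ℝ → ℝ) (β : ℝ → ℝ → ℝ) : Prop where
  cont : ContinuousOn (fun p : ℝ × ℝ => β p.1 p.2) {p : ℝ × ℝ | f p.1 ≤ p.2}
  periodic : ∀ y₁ y₂, β (y₁ + 2 * π) y₂ = β y₁ y₂
  smooth : ContDiffOn ℝ 2 (fun p : ℝ × ℝ => β p.1 p.2) {p : ℝ × ℝ | f p.1 < p.2}
  harmonic : ∀ p : ℝ × ℝ, f p.1 < p.2 → lap β p.1 p.2 = 0
  bc : ∀ t, β t (f t) = g t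
  energy : IntegrableOn (fun p : ℝ × ℝ => gradSq β p.1 p.2)
    {p : ℝ × ℝ | 0 < p.1 ∧ p.1 < 2 * π ∧ f p.1 < p.2}

/-- The average on the fictitious interface `Γ = {y₂ = 0}`. -/
def interfaceAvg (β : ℝ → ℝ → ℝ) : ℝ := (1 / (2 * π)) * ∫ t in (0 : ℝ)..(2 * π), β t 0

example (v : ℝ → ℝ → ℝ) (x y : ℝ) :
    lap v x y = deriv (deriv (fun t => v t y)) x + deriv (deriv (fun t => v x t)) y := rfl

lemma second_deriv_nonpos_of_isLocalMax {g : ℝ → ℝ} {x : ℝ}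
    (hg : ContDiffAt ℝ 2 g x) (hmax : IsLocalMax g x) :
    deriv (deriv g) x ≤ 0 := by
  by_contra hpos
  push_neg at hpos
  obtain ⟨u, hu, hgu⟩ := hg.contDiffOn (le_refl 2) (by simp)
  set s := interior u with hs
  have hso : IsOpen s := isOpen_interior
  have hxs : x ∈ s := mem_interior_iff_mem_nhds.2 hu
  have hC : ContDiffOn ℝ 2 g s := hgu.mono interior_subset
  have hd1 : ContDiffOn ℝ 1 (deriv g) s :=
    hC.deriv_of_isOpen hso (by norm_num)
  have hdd : DifferentiableAt ℝ (deriv g) x :=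
    ((hd1.differentiableOn (by norm_num)).differentiableAt (hso.mem_nhds hxs))
  have hDA : HasDerivAt (deriv g) (deriv (deriv g) x) x := hdd.hasDerivAt
  have h0 : deriv g x = 0 := hmax.deriv_eq_zero
  have hT : Filter.Tendsto (slope (deriv g) x) (nhdsWithin x {x}ᶜ) (nhds (deriv (deriv g) x)) :=
    hasDerivAt_iff_tendsto_slope.1 hDA
  have hslope : ∀ᶠ y in nhdsWithin x {x}ᶜ, 0 < slope (deriv g) x y :=
    hT.eventually (eventually_gt_nhds hpos)
  have hmono : nhdsWithin x (Ioi x) ≤ nhdsWithin x {x}ᶜ :=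
    nhdsWithin_mono x (fun y hy => ne_of_gt hy)
  have hpos' : ∀ᶠ y in nhdsWithin x (Ioi x), 0 < deriv g y := by
    filter_upwards [hmono hslope, self_mem_nhdsWithin] with y hy hy'
    have hxy : x < y := hy'
    have : slope (deriv g) x y = (deriv g y) / (y - x) := by
      rw [slope_def_field, h0]; ring
    rw [this] at hy
    have := mul_pos hy (sub_pos.2 hxy)
    rwa [div_mul_cancel₀] at this
    exact ne_of_gt (sub_pos.2 hxy)
  have hmem : ∀ᶠ y in nhdsWithin x (Ioi x), y ∈ s ∧ g y ≤ g x := by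
    apply Filter.Eventually.filter_mono (nhdsWithin_le_nhds)
    filter_upwards [hso.mem_nhds hxs, hmax] with y h1 h2
    exact ⟨h1, h2⟩
  obtain ⟨b, hb, hIoo⟩ := mem_nhdsGT_iff_exists_Ioo_subset.1 (hpos'.and hmem)
  set m := (x + b) / 2 with hm
  have hb' : x < b := hb
  have hxm : x < m := by rw [hm]; linarith
  have hmb : m < b := by rw [hm]; linarith
  have hsub : Icc x m ⊆ s := by
    intro y hy
    rcases eq_or_lt_of_le hy.1 with h | h
    · exact h ▸ hxs
    · exact (hIoo ⟨h, lt_of_le_of_lt hy.2 hmb⟩).2.1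
  have hmono2 : StrictMonoOn g (Icc x m) := by
    apply strictMonoOn_of_deriv_pos (convex_Icc x m) (hC.continuousOn.mono hsub)
    intro y hy
    rw [interior_Icc] at hy
    exact (hIoo ⟨hy.1, lt_trans hy.2 hmb⟩).1
  have h1 : g x < g m := hmono2 (left_mem_Icc.2 hxm.le) (right_mem_Icc.2 hxm.le) hxm
  have h2 : g m ≤ g x := (hIoo ⟨hxm, hmb⟩).2.2
  linarith

lemma not_isLocalMax_of_lap_pos {v : ℝ → ℝ → ℝ} {q : ℝ × ℝ} {U : Set (ℝ × ℝ)}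
    (hU : IsOpen U) (hq : q ∈ U) (hsm : ContDiffOn ℝ 2 (fun p : ℝ × ℝ => v p.1 p.2) U)
    (hl : 0 < lap v q.1 q.2) (hm : IsLocalMax (fun p : ℝ × ℝ => v p.1 p.2) q) : False := by
  have hat : ContDiffAt ℝ 2 (fun p : ℝ × ℝ => v p.1 p.2) q :=
    hsm.contDiffAt (hU.mem_nhds hq)
  have hline1 : ContDiffAt ℝ 2 (fun t : ℝ => ((t, q.2) : ℝ × ℝ)) q.1 :=
    (contDiff_id.prodMk contDiff_const).contDiffAt
  have hline2 : ContDiffAt ℝ 2 (fun t : ℝ => ((q.1, t) : ℝ × ℝ)) q.2 :=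
    (contDiff_const.prodMk contDiff_id).contDiffAt
  have hg1 : ContDiffAt ℝ 2 (fun t => v t q.2) q.1 := by
    have := hat.comp q.1 hline1; exact this
  have hg2 : ContDiffAt ℝ 2 (fun t => v q.1 t) q.2 := by
    have := hat.comp q.2 hline2; exact this
  have ht1 : Filter.Tendsto (fun t : ℝ => ((t, q.2) : ℝ × ℝ)) (nhds q.1) (nhds q) :=
    (continuous_id.prodMk continuous_const).tendsto q.1
  have ht2 : Filter.Tendsto (fun t : ℝ => ((q.1, t) : ℝ × ℝ)) (nhds q.2) (nhds q) :=
    (continuous_const.prodMk continuous_id).tendsto q.2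
  have hm1 : IsLocalMax (fun t => v t q.2) q.1 := ht1.eventually hm
  have hm2 : IsLocalMax (fun t => v q.1 t) q.2 := ht2.eventually hm
  have h1 := second_deriv_nonpos_of_isLocalMax hg1 hm1
  have h2 := second_deriv_nonpos_of_isLocalMax hg2 hm2
  have : lap v q.1 q.2 ≤ 0 := add_nonpos h1 h2
  linarith

section Calc
variable {F : ℝ → ℝ → ℝ} {U : Set (ℝ × ℝ)}

/-- derivative of the vertical line embedding -/
lemma hasDerivAt_line2 (x y : ℝ) : HasDerivAt (fun t : ℝ => ((x, t) : ℝ × ℝ)) (0, 1) y :=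
  (hasDerivAt_const y x).prodMk (hasDerivAt_id y)

lemma hasDerivAt_line1 (x y : ℝ) : HasDerivAt (fun t : ℝ => ((t, y) : ℝ × ℝ)) (1, 0) x :=
  (hasDerivAt_id x).prodMk (hasDerivAt_const x y)

variable (hU : IsOpen U) (hsm : ContDiffOn ℝ 2 (fun p : ℝ × ℝ => F p.1 p.2) U)

include hU hsm

lemma hasDerivAt_pd2 {x y : ℝ} (h : (x, y) ∈ U) :
    HasDerivAt (fun t => F x t) (pd2 F x y) y := by
  have hdiff : DifferentiableAt ℝ (fun p : ℝ × ℝ => F p.1 p.2) (x, y) :=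
    ((hsm.differentiableOn (by norm_num)).differentiableAt (hU.mem_nhds h))
  have := hdiff.hasFDerivAt.comp_hasDerivAt y (hasDerivAt_line2 x y)
  have h2 : pd2 F x y = fderiv ℝ (fun p : ℝ × ℝ => F p.1 p.2) (x, y) (0, 1) := this.deriv
  rw [h2]; exact this

lemma hasDerivAt_pd1 {x y : ℝ} (h : (x, y) ∈ U) :
    HasDerivAt (fun t => F t y) (pd1 F x y) x := by
  have hdiff : DifferentiableAt ℝ (fun p : ℝ × ℝ => F p.1 p.2) (x, y) :=
    ((hsm.differentiableOn (by norm_num)).differentiableAt (hU.mem_nhds h))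
  have := hdiff.hasFDerivAt.comp_hasDerivAt x (hasDerivAt_line1 x y)
  have h2 : pd1 F x y = fderiv ℝ (fun p : ℝ × ℝ => F p.1 p.2) (x, y) (1, 0) := this.deriv
  rw [h2]; exact this

lemma contDiffOn_grad :
    ContDiffOn ℝ 1 (fun p => fderiv ℝ (fun p : ℝ × ℝ => F p.1 p.2) p (1, 0)) U ∧
    ContDiffOn ℝ 1 (fun p => fderiv ℝ (fun p : ℝ × ℝ => F p.1 p.2) p (0, 1)) U := by
  have hfd : ContDiffOn ℝ 1 (fderiv ℝ (fun p : ℝ × ℝ => F p.1 p.2)) U :=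
    hsm.fderiv_of_isOpen hU (by norm_num)
  exact ⟨hfd.clm_apply contDiffOn_const, hfd.clm_apply contDiffOn_const⟩

lemma pd1_eqOn : ∀ {x y : ℝ}, (x, y) ∈ U →
    pd1 F x y = fderiv ℝ (fun p : ℝ × ℝ => F p.1 p.2) (x, y) (1, 0) := by
  intro x y h
  have hdiff : DifferentiableAt ℝ (fun p : ℝ × ℝ => F p.1 p.2) (x, y) :=
    ((hsm.differentiableOn (by norm_num)).differentiableAt (hU.mem_nhds h))
  exact (hdiff.hasFDerivAt.comp_hasDerivAt x (hasDerivAt_line1 x y)).deriv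

lemma pd2_eqOn : ∀ {x y : ℝ}, (x, y) ∈ U →
    pd2 F x y = fderiv ℝ (fun p : ℝ × ℝ => F p.1 p.2) (x, y) (0, 1) := by
  intro x y h
  have hdiff : DifferentiableAt ℝ (fun p : ℝ × ℝ => F p.1 p.2) (x, y) :=
    ((hsm.differentiableOn (by norm_num)).differentiableAt (hU.mem_nhds h))
  exact (hdiff.hasFDerivAt.comp_hasDerivAt y (hasDerivAt_line2 x y)).deriv

lemma continuousOn_pd1 : ContinuousOn (fun p : ℝ × ℝ => pd1 F p.1 p.2) U := by
  apply ((contDiffOn_grad hU hsm).1.continuousOn).congr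
  intro p hp
  exact pd1_eqOn hU hsm (by rwa [Prod.mk.eta])

lemma continuousOn_pd2 : ContinuousOn (fun p : ℝ × ℝ => pd2 F p.1 p.2) U := by
  apply ((contDiffOn_grad hU hsm).2.continuousOn).congr
  intro p hp
  exact pd2_eqOn hU hsm (by rwa [Prod.mk.eta])

end Calc

section Calc2
variable {G : ℝ × ℝ → ℝ} {U : Set (ℝ × ℝ)}
variable (hU : IsOpen U) (hG : ContDiffOn ℝ 1 G U)

include hU hG

lemma hasDerivAt_section_vert {x y : ℝ} (h : (x, y) ∈ U) :
    HasDerivAt (fun t => G (x, t)) (fderiv ℝ G (x, y) (0, 1)) y := by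
  have hdiff : DifferentiableAt ℝ G (x, y) :=
    (hG.differentiableOn (by norm_num)).differentiableAt (hU.mem_nhds h)
  exact hdiff.hasFDerivAt.comp_hasDerivAt y (hasDerivAt_line2 x y)

lemma hasDerivAt_section_horiz {x y : ℝ} (h : (x, y) ∈ U) :
    HasDerivAt (fun t => G (t, y)) (fderiv ℝ G (x, y) (1, 0)) x := by
  have hdiff : DifferentiableAt ℝ G (x, y) :=
    (hG.differentiableOn (by norm_num)).differentiableAt (hU.mem_nhds h)
  exact hdiff.hasFDerivAt.comp_hasDerivAt x (hasDerivAt_line1 x y)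

lemma hasDerivAt_congr_vert {φ : ℝ → ℝ} {x y : ℝ} (h : (x, y) ∈ U)
    (heq : ∀ t, (x, t) ∈ U → φ t = G (x, t)) :
    HasDerivAt φ (fderiv ℝ G (x, y) (0, 1)) y := by
  apply (hasDerivAt_section_vert hU hG h).congr_of_eventuallyEq
  have hV : {t : ℝ | (x, t) ∈ U} ∈ nhds y := by
    have : IsOpen {t : ℝ | (x, t) ∈ U} := hU.preimage (continuous_const.prodMk continuous_id)
    exact this.mem_nhds h
  filter_upwards [hV] with t ht
  exact heq t ht

lemma hasDerivAt_congr_horiz {φ : ℝ → ℝ} {x y : ℝ} (h : (x, y) ∈ U)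
    (heq : ∀ t, (t, y) ∈ U → φ t = G (t, y)) :
    HasDerivAt φ (fderiv ℝ G (x, y) (1, 0)) x := by
  apply (hasDerivAt_section_horiz hU hG h).congr_of_eventuallyEq
  have hV : {t : ℝ | (t, y) ∈ U} ∈ nhds x := by
    have : IsOpen {t : ℝ | (t, y) ∈ U} := hU.preimage (continuous_id.prodMk continuous_const)
    exact this.mem_nhds h
  filter_upwards [hV] with t ht
  exact heq t ht

end Calc2

section Calc3
variable {F : ℝ → ℝ → ℝ} {U : Set (ℝ × ℝ)}
variable (hU : IsOpen U) (hsm : ContDiffOn ℝ 2 (fun p : ℝ × ℝ => F p.1 p.2) U)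

include hU hsm

/-- second vertical derivative as derivative of `pd2` slice -/
lemma hasDerivAt_pd2_pd2 {x y : ℝ} (h : (x, y) ∈ U) :
    HasDerivAt (fun t => pd2 F x t) (pd2 (pd2 F) x y) y := by
  have hG := (contDiffOn_grad hU hsm).2
  have := hasDerivAt_congr_vert hU hG h
    (φ := fun t => pd2 F x t) (fun t ht => pd2_eqOn hU hsm ht)
  have h2 : pd2 (pd2 F) x y = fderiv ℝ
      (fun p => fderiv ℝ (fun p : ℝ × ℝ => F p.1 p.2) p (0, 1)) (x, y) (0, 1) := this.deriv
  rw [h2]; exact this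

lemma hasDerivAt_pd1_pd1 {x y : ℝ} (h : (x, y) ∈ U) :
    HasDerivAt (fun t => pd1 F t y) (pd1 (pd1 F) x y) x := by
  have hG := (contDiffOn_grad hU hsm).1
  have := hasDerivAt_congr_horiz hU hG h
    (φ := fun t => pd1 F t y) (fun t ht => pd1_eqOn hU hsm ht)
  have h2 : pd1 (pd1 F) x y = fderiv ℝ
      (fun p => fderiv ℝ (fun p : ℝ × ℝ => F p.1 p.2) p (1, 0)) (x, y) (1, 0) := this.deriv
  rw [h2]; exact this

lemma continuousOn_pd2_pd2 : ContinuousOn (fun p : ℝ × ℝ => pd2 (pd2 F) p.1 p.2) U := by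
  have hG := (contDiffOn_grad hU hsm).2
  have hc : ContinuousOn (fun p => fderiv ℝ
      (fun p => fderiv ℝ (fun p : ℝ × ℝ => F p.1 p.2) p (0, 1)) p (0, 1)) U :=
    ((ContDiffOn.fderiv_of_isOpen (m := 0) hG hU (by norm_num)).clm_apply contDiffOn_const).continuousOn
  apply hc.congr
  intro p hp
  have := hasDerivAt_congr_vert hU hG (by rwa [Prod.mk.eta] : (p.1, p.2) ∈ U)
    (φ := fun t => pd2 F p.1 t) (fun t ht => pd2_eqOn hU hsm ht)
  exact this.deriv

lemma continuousOn_pd1_pd1 : ContinuousOn (fun p : ℝ × ℝ => pd1 (pd1 F) p.1 p.2) U := by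
  have hG := (contDiffOn_grad hU hsm).1
  have hc : ContinuousOn (fun p => fderiv ℝ
      (fun p => fderiv ℝ (fun p : ℝ × ℝ => F p.1 p.2) p (1, 0)) p (1, 0)) U :=
    ((ContDiffOn.fderiv_of_isOpen (m := 0) hG hU (by norm_num)).clm_apply contDiffOn_const).continuousOn
  apply hc.congr
  intro p hp
  have := hasDerivAt_congr_horiz hU hG (by rwa [Prod.mk.eta] : (p.1, p.2) ∈ U)
    (φ := fun t => pd1 F t p.2) (fun t ht => pd1_eqOn hU hsm ht)
  exact this.deriv

end Calc3

lemma lap_add_sq (u : ℝ → ℝ → ℝ) (ε : ℝ) {U : Set (ℝ × ℝ)} (hU : IsOpen U)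
    (hsm : ContDiffOn ℝ 2 (fun p : ℝ × ℝ => u p.1 p.2) U) {x y : ℝ} (h : (x, y) ∈ U) :
    lap (fun a b => u a b + ε * b ^ 2) x y = lap u x y + 2 * ε := by
  set w := fun a b => u a b + ε * b ^ 2 with hw
  have hpd1 : ∀ a b, pd1 w a b = pd1 u a b := by
    intro a b
    simp only [pd1, hw, deriv_add_const]
  have h11 : pd1 (pd1 w) x y = pd1 (pd1 u) x y := by
    have heq : (fun t => pd1 w t y) = (fun t => pd1 u t y) := funext fun t => hpd1 t y
    show deriv (fun t => pd1 w t y) x = deriv (fun t => pd1 u t y) x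
    rw [heq]
  have hVmem : {t : ℝ | (x, t) ∈ U} ∈ nhds y :=
    (hU.preimage (continuous_const.prodMk continuous_id)).mem_nhds h
  have hpd2 : (fun t => pd2 w x t) =ᶠ[nhds y] (fun t => pd2 u x t + ε * (2 * t)) := by
    filter_upwards [hVmem] with b hb
    have h1 : DifferentiableAt ℝ (fun t => u x t) b := (hasDerivAt_pd2 hU hsm hb).differentiableAt
    have h2 : HasDerivAt (fun t : ℝ => ε * t ^ 2) (ε * (2 * b)) b := by
      simpa using (hasDerivAt_pow 2 b).const_mul ε
    exact ((hasDerivAt_pd2 hU hsm hb).add h2).deriv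
  have h22 : pd2 (pd2 w) x y = pd2 (pd2 u) x y + 2 * ε := by
    have h2 : HasDerivAt (fun t : ℝ => ε * (2 * t)) (2 * ε) y := by
      exact (((hasDerivAt_id' y).const_mul 2).const_mul ε).congr_deriv (by ring)
    calc pd2 (pd2 w) x y = deriv (fun t => pd2 w x t) y := rfl
      _ = deriv (fun t => pd2 u x t + ε * (2 * t)) y := hpd2.deriv_eq
      _ = pd2 (pd2 u) x y + 2 * ε := ((hasDerivAt_pd2_pd2 hU hsm h).add h2).deriv
  simp only [lap, h11, h22]; ring

lemma max_principle (f : ℝ → ℝ) (hfc : Continuous f) (hper : Function.Periodic f (2 * π))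
    (hf0 : ∀ t, -1 ≤ f t ∧ f t < 0)
    (u : ℝ → ℝ → ℝ)
    (hc : ContinuousOn (fun p : ℝ × ℝ => u p.1 p.2) {p : ℝ × ℝ | f p.1 ≤ p.2})
    (hsm : ContDiffOn ℝ 2 (fun p : ℝ × ℝ => u p.1 p.2) {p : ℝ × ℝ | f p.1 < p.2})
    (hharm : ∀ x y, f x < y → lap u x y = 0)
    (hperu : ∀ x y, u (x + 2 * π) y = u x y)
    (c₀ B M : ℝ) (hM : 0 < M)
    (hbot : ∀ t, u t (f t) ≤ c₀)
    (htop : ∀ t, u t M ≤ B) :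
    ∀ x y, f x ≤ y → y ≤ M → u x y ≤ max c₀ B := by
  have hUo : IsOpen {p : ℝ × ℝ | f p.1 < p.2} :=
    isOpen_lt (hfc.comp continuous_fst) continuous_snd
  intro x y hy1 hy2
  apply le_of_forall_pos_le_add
  intro ε' hε'
  set ε := ε' / (1 + M ^ 2) with hεdef
  have hε : 0 < ε := div_pos hε' (by nlinarith)
  set v := fun p : ℝ × ℝ => u p.1 p.2 + ε * p.2 ^ 2 with hv
  set C := (Icc 0 (2 * π) ×ˢ Icc (-1 : ℝ) M) ∩ {p : ℝ × ℝ | f p.1 ≤ p.2} with hC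
  have hCc : IsCompact C :=
    (isCompact_Icc.prod isCompact_Icc).inter_right
      (isClosed_le (hfc.comp continuous_fst) continuous_snd)
  have hCne : C.Nonempty := by
    refine ⟨(0, 0), ⟨⟨?_, ?_⟩, ?_⟩⟩
    · exact ⟨le_refl 0, by positivity⟩
    · exact ⟨by norm_num, hM.le⟩
    · exact (hf0 0).2.le
  have hvc : ContinuousOn v C := by
    apply ContinuousOn.add (hc.mono (inter_subset_right))
    exact (continuous_const.mul (continuous_snd.pow 2)).continuousOn
  obtain ⟨q, hqC, hqmax⟩ := hCc.exists_isMaxOn hCne hvc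
  -- reduce any slab point into C by periodicity
  have hslab : ∀ p : ℝ × ℝ, f p.1 ≤ p.2 → p.2 ≤ M → v p ≤ v q := by
    intro p hp1 hp2
    set n := ⌊p.1 / (2 * π)⌋ with hn
    set x' := p.1 - n * (2 * π) with hx'
    have h2π : 0 < 2 * π := by positivity
    have hx'0 : 0 ≤ x' := Int.sub_floor_div_mul_nonneg p.1 h2π
    have hx'2 : x' < 2 * π := Int.sub_floor_div_mul_lt p.1 h2π
    have hfx : f x' = f p.1 := hper.sub_int_mul_eq n
    have hux : u x' p.2 = u p.1 p.2 := by
      have : Function.Periodic (fun s => u s p.2) (2 * π) := fun s => hperu s p.2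
      exact this.sub_int_mul_eq n
    have hmem : (x', p.2) ∈ C := by
      constructor
      · exact ⟨⟨hx'0, hx'2.le⟩, ⟨le_trans (hf0 x').1 (hfx ▸ hp1), hp2⟩⟩
      · exact (by rw [hfx]; exact hp1 : f x' ≤ p.2)
    have : v (x', p.2) = v p := by simp only [hv, hux]
    rw [← this]
    exact hqmax hmem
  -- the max point is on the bottom or top boundary
  have hqb : f q.1 ≤ q.2 := hqC.2
  have hqt : q.2 ≤ M := hqC.1.2.2
  have hcase : q.2 = f q.1 ∨ q.2 = M := by
    by_contra hcontra
    push_neg at hcontra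
    have h1 : f q.1 < q.2 := lt_of_le_of_ne hqb (Ne.symm hcontra.1)
    have h2 : q.2 < M := lt_of_le_of_ne hqt hcontra.2
    set W := {p : ℝ × ℝ | f p.1 < p.2 ∧ p.2 < M} with hW
    have hWo : IsOpen W :=
      (isOpen_lt (hfc.comp continuous_fst) continuous_snd).inter
        (isOpen_lt continuous_snd continuous_const)
    have hqW : q ∈ W := ⟨h1, h2⟩
    have hlocmax : IsLocalMax v q := by
      filter_upwards [hWo.mem_nhds hqW] with p hp
      exact hslab p hp.1.le hp.2.le
    have hsmv : ContDiffOn ℝ 2 (fun p : ℝ × ℝ => u p.1 p.2 + ε * p.2 ^ 2)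
        {p : ℝ × ℝ | f p.1 < p.2} := by
      apply hsm.add
      exact (contDiff_const.mul (contDiff_snd.pow 2)).contDiffOn
    have hlap : lap (fun a b => u a b + ε * b ^ 2) q.1 q.2 = 2 * ε := by
      rw [lap_add_sq u ε hUo hsm (by rwa [Prod.mk.eta] : (q.1, q.2) ∈ _)]
      rw [hharm q.1 q.2 h1]; ring
    exact not_isLocalMax_of_lap_pos hUo h1 hsmv (by rw [hlap]; positivity) hlocmax
  -- bound the max value
  have hvq : v q ≤ max c₀ B + ε * (1 + M ^ 2) := by
    rcases hcase with hbtm | htp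
    · have hval : v q = u q.1 (f q.1) + ε * (f q.1) ^ 2 := by
        simp only [hv]; rw [hbtm]
      have hsq : (f q.1) ^ 2 ≤ 1 := by nlinarith [(hf0 q.1).1, (hf0 q.1).2]
      have := hbot q.1
      have : v q ≤ c₀ + ε * 1 := by rw [hval]; nlinarith
      have hM2 : (0 : ℝ) ≤ M ^ 2 := sq_nonneg M
      calc v q ≤ c₀ + ε * 1 := this
        _ ≤ max c₀ B + ε * (1 + M ^ 2) := by
            have := le_max_left c₀ B; nlinarith
    · have hval : v q = u q.1 M + ε * M ^ 2 := by simp only [hv]; rw [htp]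
      have := htop q.1
      calc v q ≤ B + ε * M ^ 2 := by rw [hval]; nlinarith
        _ ≤ max c₀ B + ε * (1 + M ^ 2) := by
            have := le_max_right c₀ B; nlinarith
  have hxy : u x y ≤ v (x, y) := by simp only [hv]; nlinarith [sq_nonneg y]
  have hfin : u x y ≤ max c₀ B + ε * (1 + M ^ 2) :=
    le_trans hxy (le_trans (hslab (x, y) hy1 hy2) hvq)
  have : ε * (1 + M ^ 2) = ε' := by
    rw [hεdef]; field_simp
  linarith [hfin, this.le]

lemma swap_rect {g : ℝ × ℝ → ℝ} {a b c d : ℝ} (hab : a ≤ b) (hcd : c ≤ d)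
    (hcont : ContinuousOn g (Icc a b ×ˢ Icc c d)) :
    ∫ t in a..b, (∫ s in c..d, g (t, s)) = ∫ s in c..d, (∫ t in a..b, g (t, s)) := by
  have hint : IntegrableOn g (Icc a b ×ˢ Icc c d) volume :=
    hcont.integrableOn_compact (isCompact_Icc.prod isCompact_Icc)
  have hint2 : IntegrableOn g (Ioc a b ×ˢ Ioc c d) volume :=
    hint.mono_set (prod_mono Ioc_subset_Icc_self Ioc_subset_Icc_self)
  have hint3 : Integrable g ((volume.restrict (Ioc a b)).prod (volume.restrict (Ioc c d))) := by
    rw [Measure.prod_restrict, ← Measure.volume_eq_prod]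
    exact hint2
  have hswap := MeasureTheory.integral_integral_swap (f := fun t s => g (t, s)) hint3
  rw [intervalIntegral.integral_of_le hab, intervalIntegral.integral_of_le hcd]
  calc ∫ t in Ioc a b, (∫ s in c..d, g (t, s))
      = ∫ t in Ioc a b, (∫ s in Ioc c d, g (t, s)) := by
        apply setIntegral_congr_fun measurableSet_Ioc
        intro t _
        exact intervalIntegral.integral_of_le hcd
    _ = ∫ s in Ioc c d, (∫ t in Ioc a b, g (t, s)) := hswap
    _ = ∫ s in Ioc c d, (∫ t in a..b, g (t, s)) := by
        apply setIntegral_congr_fun measurableSet_Ioc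
        intro s _
        exact (intervalIntegral.integral_of_le hab).symm

lemma continuousOn_slice_horiz {W : ℝ × ℝ → ℝ} {U : Set (ℝ × ℝ)} (hUo : IsOpen U)
    (hW : ContinuousOn W U) (s : ℝ) {S : Set ℝ} (hs : ∀ t ∈ S, (t, s) ∈ U) :
    ContinuousOn (fun t => W (t, s)) S := by
  intro t htS
  have h1 : ContinuousAt (fun t : ℝ => ((t, s) : ℝ × ℝ)) t :=
    (continuous_id.prodMk continuous_const).continuousAt
  exact (ContinuousAt.comp (f := fun t : ℝ => ((t, s) : ℝ × ℝ))
    (hW.continuousAt (hUo.mem_nhds (hs t htS))) h1).continuousWithinAt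

lemma continuousOn_slice_vert {W : ℝ × ℝ → ℝ} {U : Set (ℝ × ℝ)} (hUo : IsOpen U)
    (hW : ContinuousOn W U) (t : ℝ) {S : Set ℝ} (hs : ∀ s ∈ S, (t, s) ∈ U) :
    ContinuousOn (fun s => W (t, s)) S := by
  intro s hsS
  have h1 : ContinuousAt (fun s : ℝ => ((t, s) : ℝ × ℝ)) s :=
    (continuous_const.prodMk continuous_id).continuousAt
  exact (ContinuousAt.comp (f := fun s : ℝ => ((t, s) : ℝ × ℝ))
    (hW.continuousAt (hUo.mem_nhds (hs s hsS))) h1).continuousWithinAt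

lemma pd1_periodic {u : ℝ → ℝ → ℝ} (hperu' : ∀ x y, u (x + 2 * π) y = u x y) (s : ℝ) :
    pd1 u (2 * π) s = pd1 u 0 s := by
  have hfun : (fun x => u x s) = (fun x => u (x + 2 * π) s) :=
    funext fun x => (hperu' x s).symm
  calc pd1 u (2 * π) s = deriv (fun x => u x s) (0 + 2 * π) := by rw [zero_add]; rfl
    _ = deriv (fun x => u (x + 2 * π) s) 0 := (deriv_comp_add_const _ _ _).symm
    _ = deriv (fun x => u x s) 0 := by rw [← hfun]
    _ = pd1 u 0 s := by rw [pd1]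

section Flux
variable {f : ℝ → ℝ} {u : ℝ → ℝ → ℝ}
variable (hfc : Continuous f)
variable (hsm : ContDiffOn ℝ 2 (fun p : ℝ × ℝ => u p.1 p.2) {p : ℝ × ℝ | f p.1 < p.2})
variable (hharm : ∀ x y, f x < y → lap u x y = 0)
variable (hperu : ∀ x y, u (x + 2 * π) y = u x y)

include hfc hsm hharm hperu

lemma flux_const {M₁ M₂ : ℝ} (hM₁ : ∀ t, f t < M₁) (h12 : M₁ ≤ M₂) :
    ∫ t in (0:ℝ)..(2 * π), pd2 u t M₂ = ∫ t in (0:ℝ)..(2 * π), pd2 u t M₁ := by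
  have hUo : IsOpen {p : ℝ × ℝ | f p.1 < p.2} :=
    isOpen_lt (hfc.comp continuous_fst) continuous_snd
  have hmemR : ∀ t s : ℝ, M₁ ≤ s → (t, s) ∈ {p : ℝ × ℝ | f p.1 < p.2} :=
    fun t s hs => lt_of_lt_of_le (hM₁ t) hs
  have hπ : (0:ℝ) ≤ 2 * π := by positivity
  have c22 := continuousOn_pd2_pd2 hUo hsm
  have c11 := continuousOn_pd1_pd1 hUo hsm
  have c2 := continuousOn_pd2 hUo hsm
  have i1 : IntervalIntegrable (fun t => pd2 u t M₁) volume 0 (2 * π) :=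
    (continuousOn_slice_horiz hUo c2 M₁ (fun t _ => hmemR t M₁ le_rfl)).intervalIntegrable
  have i2 : IntervalIntegrable (fun t => pd2 u t M₂) volume 0 (2 * π) :=
    (continuousOn_slice_horiz hUo c2 M₂ (fun t _ => hmemR t M₂ h12)).intervalIntegrable
  have step1 : ∀ t : ℝ, pd2 u t M₂ - pd2 u t M₁
      = ∫ s in M₁..M₂, pd2 (pd2 u) t s := by
    intro t
    refine (intervalIntegral.integral_eq_sub_of_hasDerivAt
      (f := fun s => pd2 u t s) (f' := fun s => pd2 (pd2 u) t s) ?_ ?_).symm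
    · intro s hs
      rw [uIcc_of_le h12] at hs
      exact hasDerivAt_pd2_pd2 hUo hsm (hmemR t s hs.1)
    · apply ContinuousOn.intervalIntegrable
      apply continuousOn_slice_vert hUo c22 t
      intro s hs
      rw [uIcc_of_le h12] at hs
      exact hmemR t s hs.1
  have inner0 : ∀ s : ℝ, M₁ ≤ s → (∫ t in (0:ℝ)..(2 * π), pd2 (pd2 u) t s) = 0 := by
    intro s hs
    have hcong : ∀ t ∈ uIcc (0:ℝ) (2 * π), pd2 (pd2 u) t s = -(pd1 (pd1 u) t s) := by
      intro t _
      have := hharm t s (hM₁ t |>.trans_le hs)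
      simp only [lap] at this
      linarith
    rw [intervalIntegral.integral_congr hcong, intervalIntegral.integral_neg]
    have hftc := intervalIntegral.integral_eq_sub_of_hasDerivAt
      (f := fun t => pd1 u t s) (f' := fun t => pd1 (pd1 u) t s) (a := (0:ℝ)) (b := 2 * π)
      (fun t _ => hasDerivAt_pd1_pd1 hUo hsm (hmemR t s hs))
      (ContinuousOn.intervalIntegrable
        (continuousOn_slice_horiz hUo c11 s (fun t _ => hmemR t s hs)))
    rw [hftc]
    show -(pd1 u (2 * π) s - pd1 u 0 s) = 0
    rw [pd1_periodic hperu s]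
    ring
  have hrect : ContinuousOn (fun p : ℝ × ℝ => pd2 (pd2 u) p.1 p.2)
      (Icc 0 (2 * π) ×ˢ Icc M₁ M₂) := by
    apply c22.mono
    rintro ⟨t, s⟩ ⟨_, hs2⟩
    exact hmemR t s hs2.1
  have hsub : (∫ t in (0:ℝ)..(2 * π), pd2 u t M₂) - (∫ t in (0:ℝ)..(2 * π), pd2 u t M₁)
      = ∫ t in (0:ℝ)..(2 * π), (pd2 u t M₂ - pd2 u t M₁) :=
    (intervalIntegral.integral_sub i2 i1).symm
  have : (∫ t in (0:ℝ)..(2 * π), pd2 u t M₂) - (∫ t in (0:ℝ)..(2 * π), pd2 u t M₁) = 0 := by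
    rw [hsub]
    rw [intervalIntegral.integral_congr (fun t _ => step1 t)]
    rw [swap_rect hπ h12 hrect]
    rw [intervalIntegral.integral_congr (g := fun _ => (0:ℝ))
      (fun s hs => by rw [uIcc_of_le h12] at hs; exact inner0 s hs.1)]
    simp
  linarith

omit hharm hperu in
lemma mean_diff {M₁ M₂ : ℝ} (hM₁ : ∀ t, f t < M₁) (h12 : M₁ ≤ M₂) :
    (∫ t in (0:ℝ)..(2 * π), u t M₂) - (∫ t in (0:ℝ)..(2 * π), u t M₁)
      = ∫ s in M₁..M₂, (∫ t in (0:ℝ)..(2 * π), pd2 u t s) := by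
  have hUo : IsOpen {p : ℝ × ℝ | f p.1 < p.2} :=
    isOpen_lt (hfc.comp continuous_fst) continuous_snd
  have hmemR : ∀ t s : ℝ, M₁ ≤ s → (t, s) ∈ {p : ℝ × ℝ | f p.1 < p.2} :=
    fun t s hs => lt_of_lt_of_le (hM₁ t) hs
  have hπ : (0:ℝ) ≤ 2 * π := by positivity
  have cu := hsm.continuousOn
  have c2 := continuousOn_pd2 hUo hsm
  have i1 : IntervalIntegrable (fun t => u t M₁) volume 0 (2 * π) :=
    (continuousOn_slice_horiz hUo cu M₁ (fun t _ => hmemR t M₁ le_rfl)).intervalIntegrable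
  have i2 : IntervalIntegrable (fun t => u t M₂) volume 0 (2 * π) :=
    (continuousOn_slice_horiz hUo cu M₂ (fun t _ => hmemR t M₂ h12)).intervalIntegrable
  have step1 : ∀ t : ℝ, u t M₂ - u t M₁ = ∫ s in M₁..M₂, pd2 u t s := by
    intro t
    refine (intervalIntegral.integral_eq_sub_of_hasDerivAt
      (f := fun s => u t s) (f' := fun s => pd2 u t s) ?_ ?_).symm
    · intro s hs
      rw [uIcc_of_le h12] at hs
      exact hasDerivAt_pd2 hUo hsm (hmemR t s hs.1)
    · apply ContinuousOn.intervalIntegrable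
      apply continuousOn_slice_vert hUo c2 t
      intro s hs
      rw [uIcc_of_le h12] at hs
      exact hmemR t s hs.1
  have hrect : ContinuousOn (fun p : ℝ × ℝ => pd2 u p.1 p.2)
      (Icc 0 (2 * π) ×ˢ Icc M₁ M₂) := by
    apply c2.mono
    rintro ⟨t, s⟩ ⟨_, hs2⟩
    exact hmemR t s hs2.1
  rw [(intervalIntegral.integral_sub i2 i1).symm]
  rw [intervalIntegral.integral_congr (fun t _ => step1 t)]
  exact swap_rect hπ h12 hrect

end Flux



lemma exists_good_height {f : ℝ → ℝ} {W : ℝ × ℝ → ℝ}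
    (hE : IntegrableOn W {p : ℝ × ℝ | 0 < p.1 ∧ p.1 < 2 * π ∧ f p.1 < p.2})
    (hf0 : ∀ t, f t < 0) (ε N : ℝ) (hε : 0 < ε) :
    ∃ M, N < M ∧ 0 < M ∧ (∫ t in (0:ℝ)..(2 * π), W (t, M)) ≤ ε := by
  by_contra hcon
  push_neg at hcon
  set N' := max N 0 with hN'
  have hsub : (Ioo (0:ℝ) (2 * π) ×ˢ Ioi N') ⊆
      {p : ℝ × ℝ | 0 < p.1 ∧ p.1 < 2 * π ∧ f p.1 < p.2} := by
    rintro ⟨t, s⟩ ⟨⟨ht1, ht2⟩, hs⟩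
    exact ⟨ht1, ht2, lt_trans (lt_of_lt_of_le (hf0 t) (le_max_right N 0)) hs⟩
  have h1 : IntegrableOn W (Ioo (0:ℝ) (2 * π) ×ˢ Ioi N') volume := hE.mono_set hsub
  have h2 : Integrable W ((volume.restrict (Ioo 0 (2 * π))).prod (volume.restrict (Ioi N'))) := by
    rw [Measure.prod_restrict, ← Measure.volume_eq_prod]
    exact h1
  have h3 : Integrable (fun M => ∫ t, W (t, M) ∂(volume.restrict (Ioo 0 (2 * π))))
      (volume.restrict (Ioi N')) := h2.integral_prod_right
  have hval : ∀ M : ℝ, (∫ t, W (t, M) ∂(volume.restrict (Ioo 0 (2 * π))))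
      = ∫ t in (0:ℝ)..(2 * π), W (t, M) := by
    intro M
    rw [intervalIntegral.integral_of_le (by positivity : (0:ℝ) ≤ 2 * π)]
    exact (integral_Ioc_eq_integral_Ioo).symm
  have hconst : Integrable (fun _ : ℝ => ε) (volume.restrict (Ioi N')) := by
    apply Integrable.mono h3 aestronglyMeasurable_const
    rw [ae_restrict_iff' measurableSet_Ioi]
    apply ae_of_all
    intro M hM
    have hNM : N < M := lt_of_le_of_lt (le_max_left N 0) hM
    have h0M : 0 < M := lt_of_le_of_lt (le_max_right N 0) hM
    have := hcon M hNM h0M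
    rw [Real.norm_eq_abs, Real.norm_eq_abs, hval M]
    rw [abs_of_pos hε]
    exact le_trans this.le (le_abs_self _)
  rcases integrable_const_iff.mp hconst with h | h
  · exact hε.ne' h
  · have h := h.measure_univ_lt_top
    rw [Measure.restrict_apply_univ, Real.volume_Ioi] at h
    exact (lt_irrefl _ h).elim

section Osc
variable {f : ℝ → ℝ} {u : ℝ → ℝ → ℝ}
variable (hfc : Continuous f)
variable (hsm : ContDiffOn ℝ 2 (fun p : ℝ × ℝ => u p.1 p.2) {p : ℝ × ℝ | f p.1 < p.2})
variable (hperu : ∀ x y, u (x + 2 * π) y = u x y)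

include hfc hsm hperu

lemma osc_bound {M : ℝ} (hM : ∀ t, f t < M) (t : ℝ) :
    |u t M - u 0 M| ≤ ∫ s in (0:ℝ)..(2 * π), |pd1 u s M| := by
  have hUo : IsOpen {p : ℝ × ℝ | f p.1 < p.2} :=
    isOpen_lt (hfc.comp continuous_fst) continuous_snd
  have c1 := continuousOn_pd1 hUo hsm
  have hπ : (0:ℝ) < 2 * π := by positivity
  have hmem : ∀ s : ℝ, (s, M) ∈ {p : ℝ × ℝ | f p.1 < p.2} := fun s => hM s
  have hcont : Continuous (fun s => pd1 u s M) := by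
    apply continuous_iff_continuousAt.2
    intro s
    have h1 : ContinuousAt (fun s : ℝ => ((s, M) : ℝ × ℝ)) s :=
      (continuous_id.prodMk continuous_const).continuousAt
    exact ContinuousAt.comp (f := fun s : ℝ => ((s, M) : ℝ × ℝ))
      (c1.continuousAt (hUo.mem_nhds (hmem s))) h1
  have key : ∀ t' ∈ Icc (0:ℝ) (2 * π),
      |u t' M - u 0 M| ≤ ∫ s in (0:ℝ)..(2 * π), |pd1 u s M| := by
    intro t' ht'
    have hftc := intervalIntegral.integral_eq_sub_of_hasDerivAt
      (f := fun s => u s M) (f' := fun s => pd1 u s M) (a := (0:ℝ)) (b := t')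
      (fun s _ => hasDerivAt_pd1 hUo hsm (hmem s))
      (hcont.intervalIntegrable _ _)
    rw [← hftc]
    calc |∫ s in (0:ℝ)..t', pd1 u s M| ≤ ∫ s in (0:ℝ)..t', |pd1 u s M| :=
          intervalIntegral.abs_integral_le_integral_abs ht'.1
      _ ≤ ∫ s in (0:ℝ)..(2 * π), |pd1 u s M| := by
          apply intervalIntegral.integral_mono_interval le_rfl ht'.1 ht'.2
          · apply ae_of_all; intro s; exact abs_nonneg _
          · exact (hcont.abs).intervalIntegrable _ _
  -- reduce general t by periodicity
  set n := ⌊t / (2 * π)⌋ with hn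
  set t' := t - n * (2 * π) with ht'
  have ht'0 : 0 ≤ t' := Int.sub_floor_div_mul_nonneg t hπ
  have ht'2 : t' < 2 * π := Int.sub_floor_div_mul_lt t hπ
  have hut : u t' M = u t M := by
    have : Function.Periodic (fun s => u s M) (2 * π) := fun s => hperu s M
    exact this.sub_int_mul_eq n
  rw [← hut]
  exact key t' ⟨ht'0, ht'2.le⟩

lemma mean_dev {M : ℝ} (hM : ∀ t, f t < M) (t : ℝ) :
    |u t M - (∫ s in (0:ℝ)..(2 * π), u s M) / (2 * π)|
      ≤ 2 * ∫ s in (0:ℝ)..(2 * π), |pd1 u s M| := by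
  have hUo : IsOpen {p : ℝ × ℝ | f p.1 < p.2} :=
    isOpen_lt (hfc.comp continuous_fst) continuous_snd
  have hπ : (0:ℝ) < 2 * π := by positivity
  set Q := ∫ s in (0:ℝ)..(2 * π), |pd1 u s M| with hQ
  set A := ∫ s in (0:ℝ)..(2 * π), u s M with hA
  have hosc := osc_bound hfc hsm hperu hM
  have hcu : Continuous (fun s => u s M) := by
    apply continuous_iff_continuousAt.2
    intro s
    have h1 : ContinuousAt (fun s : ℝ => ((s, M) : ℝ × ℝ)) s :=
      (continuous_id.prodMk continuous_const).continuousAt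
    exact ContinuousAt.comp (f := fun s : ℝ => ((s, M) : ℝ × ℝ))
      (hsm.continuousOn.continuousAt (hUo.mem_nhds (hM s))) h1
  have hsub : A - (2 * π) * u t M = ∫ s in (0:ℝ)..(2 * π), (u s M - u t M) := by
    rw [intervalIntegral.integral_sub (hcu.intervalIntegrable _ _)
      (intervalIntegrable_const)]
    rw [intervalIntegral.integral_const]
    simp [hA]
  have hbd : |A - (2 * π) * u t M| ≤ (2 * Q) * |2 * π - 0| := by
    rw [hsub, ← Real.norm_eq_abs]
    apply intervalIntegral.norm_integral_le_of_norm_le_const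
    intro s _
    rw [Real.norm_eq_abs]
    calc |u s M - u t M| = |(u s M - u 0 M) + (u 0 M - u t M)| := by ring_nf
      _ ≤ |u s M - u 0 M| + |u 0 M - u t M| := abs_add_le _ _
      _ ≤ 2 * Q := by
          have h1 := hosc s
          have h2 := hosc t
          rw [← hQ] at h1 h2
          rw [abs_sub_comm (u 0 M) (u t M)]
          linarith
  have h2π : |2 * π - 0| = 2 * π := by
    rw [sub_zero, abs_of_pos hπ]
  rw [h2π] at hbd
  have key : |A - 2 * π * u t M| = 2 * π * |u t M - A / (2 * π)| := by
    have hPA : 2 * π * (A / (2 * π)) = A := by field_simp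
    calc |A - 2 * π * u t M| = |2 * π * (A / (2 * π) - u t M)| := by
          rw [mul_sub, hPA]
      _ = |2 * π| * |A / (2 * π) - u t M| := abs_mul _ _
      _ = 2 * π * |u t M - A / (2 * π)| := by rw [abs_of_pos hπ, abs_sub_comm]
  rw [key] at hbd
  nlinarith [hbd, hπ]

end Osc

lemma continuous_horiz_slice {W : ℝ × ℝ → ℝ} {U : Set (ℝ × ℝ)} (hUo : IsOpen U)
    (hW : ContinuousOn W U) {M : ℝ} (hM : ∀ t, (t, M) ∈ U) :
    Continuous (fun t => W (t, M)) := by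
  apply continuous_iff_continuousAt.2
  intro s
  have h1 : ContinuousAt (fun s : ℝ => ((s, M) : ℝ × ℝ)) s :=
    (continuous_id.prodMk continuous_const).continuousAt
  exact ContinuousAt.comp (f := fun s : ℝ => ((s, M) : ℝ × ℝ))
    (hW.continuousAt (hUo.mem_nhds (hM s))) h1

lemma integral_abs_le_energy {ψ g : ℝ → ℝ} (hψ : Continuous ψ) (hg : Continuous g)
    (hpt : ∀ s, ψ s ^ 2 ≤ g s) {d : ℝ} (hd : 0 < d) :
    (∫ s in (0:ℝ)..(2 * π), |ψ s|) ≤ (∫ s in (0:ℝ)..(2 * π), g s) / (2 * d) + π * d := by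
  have hπ : (0:ℝ) ≤ 2 * π := by positivity
  have hmono : ∀ s ∈ Icc (0:ℝ) (2 * π), |ψ s| ≤ g s / (2 * d) + d / 2 := by
    intro s _
    have h1 := sq_nonneg (|ψ s| - d)
    have h2 := sq_abs (ψ s)
    have h3 := hpt s
    rw [div_add' _ _ _ (by positivity : (2:ℝ) * d ≠ 0)]
    rw [le_div_iff₀ (by positivity : (0:ℝ) < 2 * d)]
    nlinarith
  calc (∫ s in (0:ℝ)..(2 * π), |ψ s|)
      ≤ ∫ s in (0:ℝ)..(2 * π), (g s / (2 * d) + d / 2) := by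
        apply intervalIntegral.integral_mono_on hπ
          (hψ.abs.intervalIntegrable _ _)
          (((hg.div_const _).add continuous_const).intervalIntegrable _ _) hmono
    _ = (∫ s in (0:ℝ)..(2 * π), g s) / (2 * d) + (2 * π - 0) * (d / 2) := by
        rw [intervalIntegral.integral_add ((hg.div_const _).intervalIntegrable _ _)
          intervalIntegrable_const, intervalIntegral.integral_div,
          intervalIntegral.integral_const, smul_eq_mul]
    _ = (∫ s in (0:ℝ)..(2 * π), g s) / (2 * d) + π * d := by ring

section Master
variable {f : ℝ → ℝ} {u : ℝ → ℝ → ℝ}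
variable (hfc : Continuous f) (hf0 : ∀ t, f t < 0)
variable (hsm : ContDiffOn ℝ 2 (fun p : ℝ × ℝ => u p.1 p.2) {p : ℝ × ℝ | f p.1 < p.2})
variable (hharm : ∀ x y, f x < y → lap u x y = 0)
variable (hperu : ∀ x y, u (x + 2 * π) y = u x y)
variable (hE : IntegrableOn (fun p : ℝ × ℝ => gradSq u p.1 p.2)
    {p : ℝ × ℝ | 0 < p.1 ∧ p.1 < 2 * π ∧ f p.1 < p.2})

include hfc hf0 hsm hharm hperu hE

lemma flux_zero {s : ℝ} (hs : ∀ t, f t < s) :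
    (∫ t in (0:ℝ)..(2 * π), pd2 u t s) = 0 := by
  have hUo : IsOpen {p : ℝ × ℝ | f p.1 < p.2} :=
    isOpen_lt (hfc.comp continuous_fst) continuous_snd
  have habs : |∫ t in (0:ℝ)..(2 * π), pd2 u t s| ≤ 0 := by
    have key : ∀ θ : ℝ, 0 < θ → |∫ t in (0:ℝ)..(2 * π), pd2 u t s| ≤ 0 + θ := by
      intro θ hθ
      set d := θ / (2 * π) with hdd
      have hd : 0 < d := by positivity
      obtain ⟨M, hNM, hM0, heM⟩ := exists_good_height hE hf0 (θ * d / 2) (max s 0)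
        (by positivity)
      have hsM : s ≤ M := le_trans (le_max_left s 0) hNM.le
      have hMgt : ∀ t, f t < M := fun t => lt_of_lt_of_le (hs t) hsM
      have hPM : (∫ t in (0:ℝ)..(2 * π), pd2 u t s)
          = ∫ t in (0:ℝ)..(2 * π), pd2 u t M :=
        (flux_const hfc hsm hharm hperu hs hsM).symm
      have c2s : Continuous (fun t => pd2 u t M) :=
        continuous_horiz_slice hUo (continuousOn_pd2 hUo hsm) (fun t => hMgt t)
      have cgs : Continuous (fun t => gradSq u t M) := by
        have c1s : Continuous (fun t => pd1 u t M) :=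
          continuous_horiz_slice hUo (continuousOn_pd1 hUo hsm) (fun t => hMgt t)
        have : (fun t => gradSq u t M) = fun t => (pd1 u t M) ^ 2 + (pd2 u t M) ^ 2 := rfl
        rw [this]
        exact (c1s.pow 2).add (c2s.pow 2)
      have hpt : ∀ t, (pd2 u t M) ^ 2 ≤ gradSq u t M := by
        intro t
        have : gradSq u t M = (pd1 u t M) ^ 2 + (pd2 u t M) ^ 2 := rfl
        nlinarith [sq_nonneg (pd1 u t M)]
      rw [hPM]
      calc |∫ t in (0:ℝ)..(2 * π), pd2 u t M|
          ≤ ∫ t in (0:ℝ)..(2 * π), |pd2 u t M| :=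
            intervalIntegral.abs_integral_le_integral_abs (by positivity)
        _ ≤ (∫ t in (0:ℝ)..(2 * π), gradSq u t M) / (2 * d) + π * d :=
            integral_abs_le_energy c2s cgs hpt hd
        _ ≤ (θ * d / 2) / (2 * d) + π * d := by
            have : (∫ t in (0:ℝ)..(2 * π), gradSq u t M) / (2 * d)
                ≤ (θ * d / 2) / (2 * d) := by
              apply div_le_div_of_nonneg_right ?_ (by positivity)
              · exact heM
            linarith
        _ = θ / 4 + θ / 2 := by
            rw [hdd]; field_simp; ring
        _ ≤ 0 + θ := by linarith
    exact le_of_forall_pos_le_add key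
  have := abs_nonneg (∫ t in (0:ℝ)..(2 * π), pd2 u t s)
  have h0 : |∫ t in (0:ℝ)..(2 * π), pd2 u t s| = 0 := le_antisymm habs this
  exact abs_eq_zero.mp h0

lemma mean_const {s : ℝ} (hs : ∀ t, f t < s) :
    (∫ t in (0:ℝ)..(2 * π), u t s) = ∫ t in (0:ℝ)..(2 * π), u t 1 := by
  have h1 : ∀ t, f t < 1 := fun t => lt_trans (hf0 t) one_pos
  rcases le_total s 1 with hcase | hcase
  · have hmd := mean_diff hfc hsm hs hcase
    have : (∫ r in s..1, (∫ t in (0:ℝ)..(2 * π), pd2 u t r)) = 0 := by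
      rw [intervalIntegral.integral_congr (g := fun _ => (0:ℝ))]
      · simp
      · intro r hr
        rw [uIcc_of_le hcase] at hr
        exact flux_zero hfc hf0 hsm hharm hperu hE
          (fun t => lt_of_lt_of_le (hs t) hr.1)
    rw [this] at hmd
    linarith
  · have hmd := mean_diff hfc hsm h1 hcase
    have : (∫ r in (1:ℝ)..s, (∫ t in (0:ℝ)..(2 * π), pd2 u t r)) = 0 := by
      rw [intervalIntegral.integral_congr (g := fun _ => (0:ℝ))]
      · simp
      · intro r hr
        rw [uIcc_of_le hcase] at hr
        exact flux_zero hfc hf0 hsm hharm hperu hE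
          (fun t => lt_of_lt_of_le (h1 t) hr.1)
    rw [this] at hmd
    linarith

lemma upper_cell (hper : Function.Periodic f (2 * π)) (hfm1 : ∀ t, -1 ≤ f t)
    (hc : ContinuousOn (fun p : ℝ × ℝ => u p.1 p.2) {p : ℝ × ℝ | f p.1 ≤ p.2})
    (c₀ : ℝ) (hbot : ∀ t, u t (f t) ≤ c₀) :
    ∀ x y, f x ≤ y → u x y ≤ max c₀ ((∫ t in (0:ℝ)..(2 * π), u t 1) / (2 * π)) := by
  have hUo : IsOpen {p : ℝ × ℝ | f p.1 < p.2} :=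
    isOpen_lt (hfc.comp continuous_fst) continuous_snd
  intro x y hxy
  set a := (∫ t in (0:ℝ)..(2 * π), u t 1) / (2 * π) with ha
  apply le_of_forall_pos_le_add
  intro η hη
  have hπ : (0:ℝ) < π := pi_pos
  set d := η / (8 * π) with hd'
  have hd : 0 < d := by positivity
  obtain ⟨M, hNM, hM0, heM⟩ := exists_good_height hE hf0 (η * d / 2) (max 1 y)
    (by positivity)
  have hy_le : y ≤ M := le_trans (le_max_right 1 y) hNM.le
  have hMgt : ∀ t, f t < M := fun t => lt_trans (hf0 t) hM0
  have hmean : (∫ t in (0:ℝ)..(2 * π), u t M) = ∫ t in (0:ℝ)..(2 * π), u t 1 :=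
    mean_const hfc hf0 hsm hharm hperu hE hMgt
  have c1s : Continuous (fun t => pd1 u t M) :=
    continuous_horiz_slice hUo (continuousOn_pd1 hUo hsm) (fun t => hMgt t)
  have c2s : Continuous (fun t => pd2 u t M) :=
    continuous_horiz_slice hUo (continuousOn_pd2 hUo hsm) (fun t => hMgt t)
  have cgs : Continuous (fun t => gradSq u t M) := by
    have : (fun t => gradSq u t M) = fun t => (pd1 u t M) ^ 2 + (pd2 u t M) ^ 2 := rfl
    rw [this]
    exact (c1s.pow 2).add (c2s.pow 2)
  have hpt1 : ∀ t, (pd1 u t M) ^ 2 ≤ gradSq u t M := by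
    intro t
    have : gradSq u t M = (pd1 u t M) ^ 2 + (pd2 u t M) ^ 2 := rfl
    nlinarith [sq_nonneg (pd2 u t M)]
  have hQ : (∫ s in (0:ℝ)..(2 * π), |pd1 u s M|) ≤ 3 * η / 8 := by
    calc (∫ s in (0:ℝ)..(2 * π), |pd1 u s M|)
        ≤ (∫ s in (0:ℝ)..(2 * π), gradSq u s M) / (2 * d) + π * d :=
          integral_abs_le_energy c1s cgs hpt1 hd
      _ ≤ (η * d / 2) / (2 * d) + π * d := by
          have h := (div_le_div_iff_of_pos_right (by positivity : (0:ℝ) < 2 * d)).2 heM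
          linarith
      _ = 3 * η / 8 := by
          rw [hd']; field_simp; ring
  have htop : ∀ t, u t M ≤ a + η := by
    intro t
    have hdev := mean_dev hfc hsm hperu hMgt t
    rw [hmean, ← ha] at hdev
    have h1 : u t M - a ≤ |u t M - a| := le_abs_self _
    have h2 : |u t M - a| ≤ 2 * (3 * η / 8) := by
      calc |u t M - a| ≤ 2 * ∫ s in (0:ℝ)..(2 * π), |pd1 u s M| := hdev
        _ ≤ 2 * (3 * η / 8) := by linarith
    linarith
  have hf01 : ∀ t, -1 ≤ f t ∧ f t < 0 := fun t => ⟨hfm1 t, hf0 t⟩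
  have := max_principle f hfc hper hf01 u hc hsm hharm hperu c₀ (a + η) M hM0 hbot htop
    x y hxy hy_le
  calc u x y ≤ max c₀ (a + η) := this
    _ ≤ max c₀ a + η := by
        apply max_le
        · exact le_add_of_le_of_nonneg (le_max_left _ _) hη.le
        · linarith [le_max_right c₀ a]

end Master

lemma slice_eq {h : ℝ → ℝ} (hcont : Continuous h) (hper : Function.Periodic h (2 * π))
    {a : ℝ} (hle : ∀ t, h t ≤ a) (hmean : (∫ t in (0:ℝ)..(2 * π), h t) = 2 * π * a)
    (t₀ : ℝ) : h t₀ = a := by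
  by_contra hne
  have hπ : (0:ℝ) < π := pi_pos
  have hlt : h t₀ < a := lt_of_le_of_ne (hle t₀) hne
  have hshift : (∫ t in (t₀ - π)..(t₀ - π + 2 * π), h t)
      = ∫ t in (0:ℝ)..(0 + 2 * π), h t := hper.intervalIntegral_add_eq (t₀ - π) 0
  rw [zero_add] at hshift
  have hstrict := intervalIntegral.integral_lt_integral_of_continuousOn_of_le_of_exists_lt
    (f := h) (g := fun _ => a) (a := t₀ - π) (b := t₀ - π + 2 * π)
    (by linarith) hcont.continuousOn continuousOn_const
    (fun x _ => hle x) ⟨t₀, ⟨by linarith, by linarith⟩, hlt⟩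
  rw [hshift, hmean, intervalIntegral.integral_const, smul_eq_mul] at hstrict
  have : (t₀ - π + 2 * π - (t₀ - π)) * a = 2 * π * a := by ring
  rw [this] at hstrict
  exact lt_irrefl _ hstrict

lemma lap_neg (v : ℝ → ℝ → ℝ) (x y : ℝ) :
    lap (fun a b => -(v a b)) x y = -(lap v x y) := by
  have hpd1 : ∀ a b, pd1 (fun a b => -(v a b)) a b = -(pd1 v a b) := by
    intro a b
    show deriv (fun t => -(v t b)) a = -(deriv (fun t => v t b) a)
    exact deriv.neg
  have hpd2 : ∀ a b, pd2 (fun a b => -(v a b)) a b = -(pd2 v a b) := by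
    intro a b
    show deriv (fun t => -(v a t)) b = -(deriv (fun t => v a t) b)
    exact deriv.neg
  have h11 : pd1 (pd1 (fun a b => -(v a b))) x y = -(pd1 (pd1 v) x y) := by
    have heq : (fun t => pd1 (fun a b => -(v a b)) t y) = fun t => -(pd1 v t y) :=
      funext fun t => hpd1 t y
    show deriv (fun t => pd1 (fun a b => -(v a b)) t y) x = _
    rw [heq]
    exact deriv.neg
  have h22 : pd2 (pd2 (fun a b => -(v a b))) x y = -(pd2 (pd2 v) x y) := by
    have heq : (fun t => pd2 (fun a b => -(v a b)) x t) = fun t => -(pd2 v x t) :=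
      funext fun t => hpd2 x t
    show deriv (fun t => pd2 (fun a b => -(v a b)) x t) y = _
    rw [heq]
    exact deriv.neg
  show pd1 (pd1 _) x y + pd2 (pd2 _) x y = _
  rw [h11, h22]
  show -(pd1 (pd1 v) x y) + -(pd2 (pd2 v) x y) = -(pd1 (pd1 v) x y + pd2 (pd2 v) x y)
  ring

lemma gradSq_neg (v : ℝ → ℝ → ℝ) (x y : ℝ) :
    gradSq (fun a b => -(v a b)) x y = gradSq v x y := by
  have hpd1 : pd1 (fun a b => -(v a b)) x y = -(pd1 v x y) := by
    show deriv (fun t => -(v t y)) x = -(deriv (fun t => v t y) x)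
    exact deriv.neg
  have hpd2 : pd2 (fun a b => -(v a b)) x y = -(pd2 v x y) := by
    show deriv (fun t => -(v x t)) y = -(deriv (fun t => v x t) y)
    exact deriv.neg
  show (pd1 _ x y) ^ 2 + (pd2 _ x y) ^ 2 = (pd1 v x y) ^ 2 + (pd2 v x y) ^ 2
  rw [hpd1, hpd2]
  ring


/-- Bounds for the second-order cell solution: `−1 ≤ γ ≤ 0` above the rough boundary;
in particular `γ̄ ∈ [−1,0]`. -/
theorem second_order_cell_solution_bounds
    (f : ℝ → ℝ) (K : NNReal) (δ : ℝ)
    (hf : LipschitzWith K f) (hper : Function.Periodic f (2 * π))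
    (hδ0 : 0 < δ) (hδ1 : δ < 1) (hfb : ∀ t, -1 ≤ f t ∧ f t ≤ -δ)
    (γ : ℝ → ℝ → ℝ) (hγ : CellSolution f (fun t => -(f t) ^ 2) γ) :
    (∀ y₁ y₂ : ℝ, f y₁ ≤ y₂ → -1 ≤ γ y₁ y₂ ∧ γ y₁ y₂ ≤ 0) ∧
    -1 ≤ interfaceAvg γ ∧ interfaceAvg γ ≤ 0 := by
  have hπ : (0:ℝ) < π := pi_pos
  have hfc : Continuous f := hf.continuous
  have hf0 : ∀ t, f t < 0 := fun t => lt_of_le_of_lt (hfb t).2 (by linarith)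
  have hfm1 : ∀ t, -1 ≤ f t := fun t => (hfb t).1
  have hUo : IsOpen {p : ℝ × ℝ | f p.1 < p.2} :=
    isOpen_lt (hfc.comp continuous_fst) continuous_snd
  have hc := hγ.cont
  have hsmγ := hγ.smooth
  have hperγ : ∀ x y, γ (x + 2 * π) y = γ x y := hγ.periodic
  have hharmγ : ∀ x y, f x < y → lap γ x y = 0 := fun x y h => hγ.harmonic (x, y) h
  have hEγ := hγ.energy
  have hbcγ : ∀ t, γ t (f t) = -(f t) ^ 2 := hγ.bc
  set A := ∫ t in (0:ℝ)..(2 * π), γ t 1 with hA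
  set a := A / (2 * π) with ha
  have hA2π : A = 2 * π * a := by rw [ha]; field_simp
  -- upper bound with max 0 a
  have hbot0 : ∀ t, γ t (f t) ≤ 0 := by
    intro t; rw [hbcγ t]; exact neg_nonpos.2 (sq_nonneg _)
  have hup : ∀ x y, f x ≤ y → γ x y ≤ max 0 a :=
    upper_cell hfc hf0 hsmγ hharmγ hperγ hEγ hper hfm1 hc 0 hbot0
  -- lower bound via -γ
  have hc' : ContinuousOn (fun p : ℝ × ℝ => -(γ p.1 p.2)) {p : ℝ × ℝ | f p.1 ≤ p.2} := hc.neg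
  have hsm' : ContDiffOn ℝ 2 (fun p : ℝ × ℝ => -(γ p.1 p.2)) {p : ℝ × ℝ | f p.1 < p.2} :=
    hsmγ.neg
  have hper' : ∀ x y, -(γ (x + 2 * π) y) = -(γ x y) := fun x y => by rw [hperγ]
  have hharm' : ∀ x y, f x < y → lap (fun a b => -(γ a b)) x y = 0 := by
    intro x y h
    rw [lap_neg γ x y, hharmγ x y h, neg_zero]
  have hE' : IntegrableOn (fun p : ℝ × ℝ => gradSq (fun a b => -(γ a b)) p.1 p.2)
      {p : ℝ × ℝ | 0 < p.1 ∧ p.1 < 2 * π ∧ f p.1 < p.2} := by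
    have heq : (fun p : ℝ × ℝ => gradSq (fun a b => -(γ a b)) p.1 p.2)
        = fun p : ℝ × ℝ => gradSq γ p.1 p.2 := funext fun p => gradSq_neg γ p.1 p.2
    rw [heq]; exact hEγ
  have hbot1 : ∀ t, -(γ t (f t)) ≤ 1 := by
    intro t
    rw [hbcγ t, neg_neg]
    nlinarith [(hfb t).1, hf0 t]
  have hlow0 : ∀ x y, f x ≤ y → -(γ x y) ≤ max 1 ((∫ t in (0:ℝ)..(2 * π), -(γ t 1)) / (2 * π)) :=
    upper_cell hfc hf0 hsm' hharm' hper' hE' hper hfm1 hc' 1 hbot1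
  have hlow : ∀ x y, f x ≤ y → -(γ x y) ≤ max 1 (-a) := by
    intro x y hxy
    have h1 := hlow0 x y hxy
    rwa [intervalIntegral.integral_neg, ← hA, neg_div, ← ha] at h1
  -- maximum point of f
  obtain ⟨t₀, ht₀m, ht₀max⟩ := isCompact_Icc.exists_isMaxOn
    (⟨0, left_mem_Icc.2 (by positivity)⟩ : (Icc (0:ℝ) (2 * π)).Nonempty) hfc.continuousOn
  have hs₀ : ∀ t, f t ≤ f t₀ := by
    intro t
    have h2π : (0:ℝ) < 2 * π := by positivity
    set n := ⌊t / (2 * π)⌋ with hn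
    have h1 : 0 ≤ t - n * (2 * π) := Int.sub_floor_div_mul_nonneg t h2π
    have h2 : t - n * (2 * π) < 2 * π := Int.sub_floor_div_mul_lt t h2π
    have h3 : f (t - n * (2 * π)) = f t := hper.sub_int_mul_eq n
    rw [← h3]
    exact ht₀max ⟨h1, h2.le⟩
  -- the constant slice argument
  have hslice_const : ∀ b : ℝ, (∀ x y, f x ≤ y → γ x y ≤ b) →
      ((∫ t in (0:ℝ)..(2 * π), γ t 1) = 2 * π * b) → b = -(f t₀) ^ 2 := by
    intro b hble hbmean
    have hkey : ∀ s, f t₀ < s → γ t₀ s = b := by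
      intro s hs
      have hsgt : ∀ t, f t < s := fun t => lt_of_le_of_lt (hs₀ t) hs
      have hcont_s : Continuous (fun t => γ t s) :=
        continuous_horiz_slice hUo hsmγ.continuousOn (fun t => hsgt t)
      have hper_s : Function.Periodic (fun t => γ t s) (2 * π) := fun t => hperγ t s
      have hmean_s : (∫ t in (0:ℝ)..(2 * π), γ t s) = 2 * π * b := by
        rw [mean_const hfc hf0 hsmγ hharmγ hperγ hEγ hsgt]
        exact hbmean
      exact slice_eq hcont_s hper_s (fun t => hble t s (le_trans (hs₀ t) hs.le)) hmean_s t₀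
    have hcw : ContinuousWithinAt (fun p : ℝ × ℝ => γ p.1 p.2)
        {p : ℝ × ℝ | f p.1 ≤ p.2} (t₀, f t₀) := hc (t₀, f t₀) (le_refl (f t₀))
    have htd : Filter.Tendsto (fun s => ((t₀, s) : ℝ × ℝ)) (nhdsWithin (f t₀) (Ioi (f t₀)))
        (nhdsWithin (t₀, f t₀) {p : ℝ × ℝ | f p.1 ≤ p.2}) := by
      apply tendsto_nhdsWithin_of_tendsto_nhds_of_eventually_within
      · exact ((continuous_const.prodMk continuous_id).tendsto _).mono_left nhdsWithin_le_nhds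
      · filter_upwards [self_mem_nhdsWithin] with s hs
        exact le_of_lt hs
    have h1 : Filter.Tendsto (fun s => γ t₀ s) (nhdsWithin (f t₀) (Ioi (f t₀)))
        (nhds (γ t₀ (f t₀))) := hcw.tendsto.comp htd
    have h2 : Filter.Tendsto (fun s => γ t₀ s) (nhdsWithin (f t₀) (Ioi (f t₀)))
        (nhds b) := by
      apply Filter.Tendsto.congr' ?_ tendsto_const_nhds
      filter_upwards [self_mem_nhdsWithin] with s hs
      exact (hkey s hs).symm
    have := tendsto_nhds_unique h1 h2
    rw [hbcγ t₀] at this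
    exact this.symm
  -- a ≤ 0
  have ha_le0 : a ≤ 0 := by
    by_contra hcon
    push_neg at hcon
    have hγle : ∀ x y, f x ≤ y → γ x y ≤ a := by
      intro x y hxy
      have := hup x y hxy
      rwa [max_eq_right hcon.le] at this
    have := hslice_const a hγle (by rw [← hA2π])
    nlinarith [sq_nonneg (f t₀)]
  -- -1 ≤ a
  have ha_ge : -1 ≤ a := by
    by_contra hcon
    push_neg at hcon
    have hγge : ∀ x y, f x ≤ y → a ≤ γ x y := by
      intro x y hxy
      have h1 := hlow x y hxy
      rw [max_eq_right (by linarith : (1:ℝ) ≤ -a)] at h1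
      linarith
    -- apply the slice argument to -γ
    have hkey : ∀ s, f t₀ < s → γ t₀ s = a := by
      intro s hs
      have hsgt : ∀ t, f t < s := fun t => lt_of_le_of_lt (hs₀ t) hs
      have hcont_s : Continuous (fun t => -(γ t s)) :=
        (continuous_horiz_slice hUo hsmγ.continuousOn (fun t => hsgt t)).neg
      have hper_s : Function.Periodic (fun t => -(γ t s)) (2 * π) :=
        fun t => congrArg Neg.neg (hperγ t s)
      have hmean_s : (∫ t in (0:ℝ)..(2 * π), -(γ t s)) = 2 * π * (-a) := by
        rw [intervalIntegral.integral_neg,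
          mean_const hfc hf0 hsmγ hharmγ hperγ hEγ hsgt, ← hA, hA2π]
        ring
      have := slice_eq hcont_s hper_s
        (fun t => neg_le_neg (hγge t s (le_trans (hs₀ t) hs.le))) hmean_s t₀
      linarith
    -- limit to the boundary
    have hcw : ContinuousWithinAt (fun p : ℝ × ℝ => γ p.1 p.2)
        {p : ℝ × ℝ | f p.1 ≤ p.2} (t₀, f t₀) := hc (t₀, f t₀) (le_refl (f t₀))
    have htd : Filter.Tendsto (fun s => ((t₀, s) : ℝ × ℝ)) (nhdsWithin (f t₀) (Ioi (f t₀)))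
        (nhdsWithin (t₀, f t₀) {p : ℝ × ℝ | f p.1 ≤ p.2}) := by
      apply tendsto_nhdsWithin_of_tendsto_nhds_of_eventually_within
      · exact ((continuous_const.prodMk continuous_id).tendsto _).mono_left nhdsWithin_le_nhds
      · filter_upwards [self_mem_nhdsWithin] with s hs
        exact le_of_lt hs
    have h1 : Filter.Tendsto (fun s => γ t₀ s) (nhdsWithin (f t₀) (Ioi (f t₀)))
        (nhds (γ t₀ (f t₀))) := hcw.tendsto.comp htd
    have h2 : Filter.Tendsto (fun s => γ t₀ s) (nhdsWithin (f t₀) (Ioi (f t₀)))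
        (nhds a) := by
      apply Filter.Tendsto.congr' ?_ tendsto_const_nhds
      filter_upwards [self_mem_nhdsWithin] with s hs
      exact (hkey s hs).symm
    have heq := tendsto_nhds_unique h1 h2
    rw [hbcγ t₀] at heq
    nlinarith [(hfb t₀).1, hf0 t₀]
  -- pointwise bounds
  have hpt : ∀ y₁ y₂ : ℝ, f y₁ ≤ y₂ → -1 ≤ γ y₁ y₂ ∧ γ y₁ y₂ ≤ 0 := by
    intro y₁ y₂ hy
    constructor
    · have h1 := hlow y₁ y₂ hy
      rw [max_eq_left (by linarith : -a ≤ 1)] at h1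
      linarith
    · have h1 := hup y₁ y₂ hy
      rwa [max_eq_left ha_le0] at h1
  have hcont0 : Continuous (fun t => γ t 0) :=
    continuous_horiz_slice hUo hsmγ.continuousOn (fun t => hf0 t)
  have hb0 : ∀ t, -1 ≤ γ t 0 ∧ γ t 0 ≤ 0 := fun t => hpt t 0 (hf0 t).le
  have h2π : (0:ℝ) < 2 * π := by positivity
  have hIl : -(2 * π) ≤ ∫ t in (0:ℝ)..(2 * π), γ t 0 := by
    have := intervalIntegral.integral_mono_on h2π.le
      (intervalIntegrable_const : IntervalIntegrable (fun _ => (-1:ℝ)) volume 0 (2 * π))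
      (hcont0.intervalIntegrable _ _) (fun t _ => (hb0 t).1)
    rw [intervalIntegral.integral_const, smul_eq_mul] at this
    linarith
  have hIu : (∫ t in (0:ℝ)..(2 * π), γ t 0) ≤ 0 := by
    have := intervalIntegral.integral_mono_on h2π.le (hcont0.intervalIntegrable _ _)
      (intervalIntegrable_const : IntervalIntegrable (fun _ => (0:ℝ)) volume 0 (2 * π))
      (fun t _ => (hb0 t).2)
    rw [intervalIntegral.integral_const, smul_eq_mul, mul_zero] at this
    exact this
  refine ⟨hpt, ?_, ?_⟩
  · show -1 ≤ (1 / (2 * π)) * ∫ t in (0:ℝ)..(2 * π), γ t 0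
    have h1 := mul_le_mul_of_nonneg_left hIl (by positivity : (0:ℝ) ≤ 1 / (2 * π))
    have h2 : 1 / (2 * π) * (-(2 * π)) = -1 := by field_simp
    linarith
  · show (1 / (2 * π)) * (∫ t in (0:ℝ)..(2 * π), γ t 0) ≤ 0
    have h1 := mul_le_mul_of_nonneg_left hIu (by positivity : (0:ℝ) ≤ 1 / (2 * π))
    rw [mul_zero] at h1
    exact h1

end
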